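/- Let a, M ∈ ℝ and let U = ℝ × (0, ∞) with coordinates (t, r). Let W : U → ℝ be twice continuously differentiable and X : U → ℝ be continuously differentiable. Then the equation 2r·( r² ∂_r( X(t,r)/r² ) − r² ∂_t ∂_r W(t,r) ) = 6 a M / r holds for all (t, r) ∈ U if and only if there exists a function β : ℝ → ℝ such that X(t, r) = − a M / r + β(t) r² + r² ∂_t W(t, r) for all (t, r) ∈ U. -/

import Mathlib

/-- Partial derivative with respect to the first coordinate `t`. -/
noncomputable def pdt (g : ℝ → ℝ → ℝ) : ℝ → ℝ → ℝ := fun t r => deriv (fun s => g s r) t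

/-- Partial derivative with respect to the second coordinate `r`. -/
noncomputable def pdr (g : ℝ → ℝ → ℝ) : ℝ → ℝ → ℝ := fun t r => deriv (fun s => g t s) r

private lemma open_halfplane : IsOpen {p : ℝ × ℝ | 0 < p.2} :=
  isOpen_lt continuous_const continuous_snd

/-- `∂_t W` expressed via the Fréchet derivative of the uncurried function. -/
private lemma pdt_eq_fderiv (W : ℝ → ℝ → ℝ)
    {u v : ℝ} (hd : DifferentiableAt ℝ (fun p : ℝ × ℝ => W p.1 p.2) (u, v)) :
    pdt W u v = fderiv ℝ (fun p : ℝ × ℝ => W p.1 p.2) (u, v) (1, 0) := by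
  have hline : HasDerivAt (fun s : ℝ => ((s, v) : ℝ × ℝ)) ((1 : ℝ), (0 : ℝ)) u :=
    (hasDerivAt_id u).prodMk (hasDerivAt_const u v)
  exact (hd.hasFDerivAt.comp_hasDerivAt u hline).deriv

/-- `∂_r W` expressed via the Fréchet derivative of the uncurried function. -/
private lemma pdr_eq_fderiv (W : ℝ → ℝ → ℝ)
    {u v : ℝ} (hd : DifferentiableAt ℝ (fun p : ℝ × ℝ => W p.1 p.2) (u, v)) :
    pdr W u v = fderiv ℝ (fun p : ℝ × ℝ => W p.1 p.2) (u, v) (0, 1) := by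
  have hline : HasDerivAt (fun s : ℝ => ((u, s) : ℝ × ℝ)) ((0 : ℝ), (1 : ℝ)) v :=
    (hasDerivAt_const v u).prodMk (hasDerivAt_id v)
  exact (hd.hasFDerivAt.comp_hasDerivAt v hline).deriv

/-- Key mixed-partials lemma: for `W` that is `C²` on the half plane, the function
`s ↦ ∂_t W (t, s)` is differentiable at `r > 0` with derivative `∂_t ∂_r W (t, r)`. -/
private lemma key_mixed (W : ℝ → ℝ → ℝ)
    (hW : ContDiffOn ℝ 2 (fun p : ℝ × ℝ => W p.1 p.2) {p : ℝ × ℝ | 0 < p.2})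
    {t r : ℝ} (hr : 0 < r) :
    HasDerivAt (fun s => pdt W t s) (pdt (pdr W) t r) r := by
  set f : ℝ × ℝ → ℝ := fun p => W p.1 p.2 with hf
  have hmem : ((t, r) : ℝ × ℝ) ∈ {p : ℝ × ℝ | 0 < p.2} := hr
  have hfx : ContDiffAt ℝ 2 f (t, r) := hW.contDiffAt (open_halfplane.mem_nhds hmem)
  have hdat : ∀ u v : ℝ, 0 < v → DifferentiableAt ℝ f (u, v) := fun u v hv =>
    (hW.contDiffAt (open_halfplane.mem_nhds hv)).differentiableAt (by norm_num)
  have h2 : DifferentiableAt ℝ (fderiv ℝ f) (t, r) :=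
    (hfx.fderiv_right (m := 1) le_rfl).differentiableAt (by norm_num)
  set f'' := fderiv ℝ (fderiv ℝ f) (t, r) with hf''
  -- derivative of s ↦ fderiv f (t,s) (1,0) at r
  have c1 := (ContinuousLinearMap.apply ℝ ℝ ((1 : ℝ), (0 : ℝ)))
  have happ1 : HasFDerivAt (fun p => fderiv ℝ f p ((1 : ℝ), (0 : ℝ)))
      ((ContinuousLinearMap.apply ℝ ℝ ((1 : ℝ), (0 : ℝ))).comp f'') (t, r) :=
    (ContinuousLinearMap.apply ℝ ℝ ((1 : ℝ), (0 : ℝ))).hasFDerivAt.comp (t, r) h2.hasFDerivAt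
  have hlineR : HasDerivAt (fun s : ℝ => ((t, s) : ℝ × ℝ)) ((0 : ℝ), (1 : ℝ)) r :=
    (hasDerivAt_const r t).prodMk (hasDerivAt_id r)
  have hcomp1 : HasDerivAt (fun s : ℝ => fderiv ℝ f (t, s) ((1 : ℝ), (0 : ℝ)))
      (f'' ((0 : ℝ), (1 : ℝ)) ((1 : ℝ), (0 : ℝ))) r :=
    happ1.comp_hasDerivAt r hlineR
  have hev : (fun s => pdt W t s) =ᶠ[nhds r]
      (fun s : ℝ => fderiv ℝ f (t, s) ((1 : ℝ), (0 : ℝ))) := by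
    filter_upwards [lt_mem_nhds hr] with s hs
    exact pdt_eq_fderiv W (hdat t s hs)
  have hderiv_pdtW : HasDerivAt (fun s => pdt W t s) (f'' ((0 : ℝ), (1 : ℝ)) ((1 : ℝ), (0 : ℝ))) r :=
    hcomp1.congr_of_eventuallyEq hev
  -- pdt (pdr W) t r equals the other mixed second derivative
  have happ2 : HasFDerivAt (fun p => fderiv ℝ f p ((0 : ℝ), (1 : ℝ)))
      ((ContinuousLinearMap.apply ℝ ℝ ((0 : ℝ), (1 : ℝ))).comp f'') (t, r) :=
    (ContinuousLinearMap.apply ℝ ℝ ((0 : ℝ), (1 : ℝ))).hasFDerivAt.comp (t, r) h2.hasFDerivAt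
  have hlineT : HasDerivAt (fun s : ℝ => ((s, r) : ℝ × ℝ)) ((1 : ℝ), (0 : ℝ)) t :=
    (hasDerivAt_id t).prodMk (hasDerivAt_const t r)
  have hcomp2 : HasDerivAt (fun s : ℝ => fderiv ℝ f (s, r) ((0 : ℝ), (1 : ℝ)))
      (f'' ((1 : ℝ), (0 : ℝ)) ((0 : ℝ), (1 : ℝ))) t :=
    by have := happ2.comp_hasDerivAt t hlineT; exact this
  have hev2 : (fun s => pdr W s r) =ᶠ[nhds t]
      (fun s : ℝ => fderiv ℝ f (s, r) ((0 : ℝ), (1 : ℝ))) :=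
    Filter.Eventually.of_forall (fun s => pdr_eq_fderiv W (hdat s r hr))
  have hmixed : pdt (pdr W) t r = f'' ((1 : ℝ), (0 : ℝ)) ((0 : ℝ), (1 : ℝ)) :=
    (hcomp2.congr_of_eventuallyEq hev2).deriv
  have hsymm : f'' ((1 : ℝ), (0 : ℝ)) ((0 : ℝ), (1 : ℝ))
      = f'' ((0 : ℝ), (1 : ℝ)) ((1 : ℝ), (0 : ℝ)) :=
    (hfx.isSymmSndFDerivAt (by norm_num)) _ _
  rw [hmixed, hsymm]
  exact hderiv_pdtW

/-- The general `l = 1` odd-parity vacuum relation: for C² `W` and C¹ `X` on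
`ℝ × (0, ∞)`, the equation `2r(r² ∂_r(X/r²) − r² ∂_t ∂_r W) = 6aM/r` holds everywhere
iff there is a function `β(t)` with `X = −aM/r + β(t) r² + r² ∂_t W`. -/
theorem stmt_16 (a M : ℝ) (W X : ℝ → ℝ → ℝ)
    (hW : ContDiffOn ℝ 2 (fun p : ℝ × ℝ => W p.1 p.2) {p : ℝ × ℝ | 0 < p.2})
    (hX : ContDiffOn ℝ 1 (fun p : ℝ × ℝ => X p.1 p.2) {p : ℝ × ℝ | 0 < p.2}) :
    (∀ t r : ℝ, 0 < r →
        2 * r * (r ^ 2 * deriv (fun s => X t s / s ^ 2) r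
            - r ^ 2 * pdt (pdr W) t r)
          = 6 * a * M / r) ↔
    (∃ β : ℝ → ℝ, ∀ t r : ℝ, 0 < r →
        X t r = -(a * M) / r + β t * r ^ 2 + r ^ 2 * pdt W t r) := by
  have hdX : ∀ t r : ℝ, 0 < r → DifferentiableAt ℝ (fun s => X t s) r := by
    intro t r hr
    have h : DifferentiableAt ℝ (fun p : ℝ × ℝ => X p.1 p.2) (t, r) :=
      (hX.contDiffAt (open_halfplane.mem_nhds (by exact hr))).differentiableAt (by norm_num)
    exact h.comp r ((differentiableAt_const t).prodMk differentiableAt_id)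
  constructor
  · intro heq
    -- the quantity h t s := X t s / s² - ∂_t W t s + aM/s³ has zero r-derivative
    set h : ℝ → ℝ → ℝ := fun t s => X t s / s ^ 2 - pdt W t s + a * M / s ^ 3 with hh
    have hder : ∀ t r : ℝ, 0 < r → HasDerivAt (h t) 0 r := by
      intro t r hr
      have hr0 : r ≠ 0 := ne_of_gt hr
      have hdq : DifferentiableAt ℝ (fun s => X t s / s ^ 2) r :=
        (hdX t r hr).div (differentiableAt_id.pow 2) (pow_ne_zero 2 hr0)
      have h1 : HasDerivAt (fun s => X t s / s ^ 2)
          (deriv (fun s => X t s / s ^ 2) r) r := hdq.hasDerivAt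
      have h2 := key_mixed W hW (t := t) hr
      have h3 : HasDerivAt (fun s : ℝ => a * M / s ^ 3) (-(3 * (a * M)) / r ^ 4) r := by
        have hb : HasDerivAt (fun s : ℝ => s ^ 3) (3 * r ^ 2) r := by
          simpa using (hasDerivAt_pow 3 r)
        have := (hasDerivAt_const r (a * M)).fun_div hb (pow_ne_zero 3 hr0)
        refine this.congr_deriv ?_
        field_simp
        ring
      have hval : deriv (fun s => X t s / s ^ 2) r
          = 3 * (a * M) / r ^ 4 + pdt (pdr W) t r := by
        have := heq t r hr
        have hr2 : (r : ℝ) ^ 2 ≠ 0 := pow_ne_zero 2 hr0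
        field_simp at this ⊢
        nlinarith [this]
      have : HasDerivAt (h t)
          ((deriv (fun s => X t s / s ^ 2) r - pdt (pdr W) t r) + -(3 * (a * M)) / r ^ 4) r :=
        (h1.sub h2).add h3
      rw [hval] at this
      convert this using 1
      ring
    have hconst : ∀ t r : ℝ, 0 < r → h t r = h t 1 := by
      intro t r hr
      have hdiff : DifferentiableOn ℝ (h t) (Set.Ioi 0) := fun x hx =>
        ((hder t x hx).differentiableAt).differentiableWithinAt
      refine (convex_Ioi (0 : ℝ)).is_const_of_fderivWithin_eq_zero hdiff ?_ hr
        (Set.mem_Ioi.mpr one_pos)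
      intro x hx
      rw [fderivWithin_of_isOpen isOpen_Ioi hx, (hder t x hx).hasFDerivAt.fderiv]
      exact ContinuousLinearMap.ext fun y => by simp
    refine ⟨fun t => h t 1, ?_⟩
    intro t r hr
    have hr0 : r ≠ 0 := ne_of_gt hr
    have hc := hconst t r hr
    rw [hh] at hc
    simp only at hc
    field_simp at hc
    have goal2 : X t r * r ^ 2
        = (-(a * M) / r + h t 1 * r ^ 2 + r ^ 2 * pdt W t r) * r ^ 2 := by
      field_simp
      linear_combination hc
    exact mul_right_cancel₀ (pow_ne_zero 2 hr0) goal2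
  · rintro ⟨β, hβ⟩
    intro t r hr
    have hr0 : r ≠ 0 := ne_of_gt hr
    have hkey := key_mixed W hW (t := t) hr
    have hDeriv : HasDerivAt (fun s => X t s / s ^ 2)
        (3 * (a * M) / r ^ 4 + pdt (pdr W) t r) r := by
      have hb : HasDerivAt (fun s : ℝ => -(a * M) / s ^ 3 + β t + pdt W t s)
          (3 * (a * M) / r ^ 4 + pdt (pdr W) t r) r := by
        have hc : HasDerivAt (fun s : ℝ => -(a * M) / s ^ 3 + β t) (3 * (a * M) / r ^ 4) r := by
          have hb3 : HasDerivAt (fun s : ℝ => s ^ 3) (3 * r ^ 2) r := by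
            simpa using (hasDerivAt_pow 3 r)
          have := ((hasDerivAt_const r (-(a * M))).fun_div hb3 (pow_ne_zero 3 hr0)).add_const (β t)
          refine this.congr_deriv ?_
          field_simp
          ring
        exact hc.add hkey
      refine hb.congr_of_eventuallyEq ?_
      filter_upwards [lt_mem_nhds hr] with s hs
      have hs0 : s ≠ 0 := ne_of_gt hs
      rw [hβ t s hs]
      field_simp
    rw [hDeriv.deriv]
    field_simp
    ring
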